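/- Let I be an ideal of F_q[x_1,…,x_n] containing x_i^q − x_i for all i. Then I is the unit ideal (1) if and only if I has no common zero in F_q^n. -/
import Mathlib


open MvPolynomial

/-- Let `I` be an ideal of `F_q[x_1,…,x_n]` containing `x_i^q − x_i` for all `i`.
Then `I` is the unit ideal iff `I` has no common zero in `F_q^n`. -/
theorem stmt_4 {F : Type*} [Field F] [Fintype F] {n : ℕ}
    (I : Ideal (MvPolynomial (Fin n) F))
    (hI : ∀ i : Fin n, X i ^ Fintype.card F - X i ∈ I) :
    I = ⊤ ↔ ¬ ∃ a : Fin n → F, ∀ P ∈ I, eval a P = 0 := by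
  constructor
  · rintro rfl ⟨a, ha⟩
    have := ha 1 Submodule.mem_top
    simp at this
  · intro h
    by_contra hne
    apply h
    obtain ⟨m, hm, hIm⟩ := Ideal.exists_le_maximal I hne
    letI : Field (MvPolynomial (Fin n) F ⧸ m) := Ideal.Quotient.field m
    set φ := Ideal.Quotient.mkₐ F m with hφ
    letI : DecidableEq (MvPolynomial (Fin n) F ⧸ m) := Classical.decEq _
    set q := Fintype.card F with hq
    have hq1 : 1 < q := Fintype.one_lt_card
    -- the polynomial X^q - X over K
    set f : Polynomial (MvPolynomial (Fin n) F ⧸ m) :=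
      Polynomial.X ^ q - Polynomial.X with hf
    have hdeg : f.natDegree = q := by
      rw [hf, Polynomial.natDegree_sub_eq_left_of_natDegree_lt, Polynomial.natDegree_X_pow]
      simpa [Polynomial.natDegree_X_pow, Polynomial.natDegree_X] using hq1
    have hfne : f ≠ 0 := by
      intro h0
      rw [h0, Polynomial.natDegree_zero] at hdeg
      omega
    -- every element of algebraMap F (MvPolynomial (Fin n) F ⧸ m) range is a root
    have hroot : ∀ a : F, f.IsRoot (algebraMap F (MvPolynomial (Fin n) F ⧸ m) a) := by
      intro a
      simp only [hf, Polynomial.IsRoot, Polynomial.eval_sub, Polynomial.eval_pow,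
        Polynomial.eval_X]
      rw [← map_pow, FiniteField.pow_card, sub_self]
    have hinj : Function.Injective (algebraMap F (MvPolynomial (Fin n) F ⧸ m)) := (algebraMap F (MvPolynomial (Fin n) F ⧸ m)).injective
    -- roots finset
    have hsub : Finset.univ.image (algebraMap F (MvPolynomial (Fin n) F ⧸ m)) ⊆ f.roots.toFinset := by
      intro t ht
      obtain ⟨a, _, rfl⟩ := Finset.mem_image.mp ht
      simp only [Multiset.mem_toFinset, Polynomial.mem_roots hfne]
      exact hroot a
    have hcard1 : (Finset.univ.image (algebraMap F (MvPolynomial (Fin n) F ⧸ m))).card = q := by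
      rw [Finset.card_image_of_injective _ hinj, Finset.card_univ]
    have hcard2 : f.roots.toFinset.card ≤ q := by
      calc f.roots.toFinset.card ≤ Multiset.card f.roots := f.roots.toFinset_card_le
        _ ≤ f.natDegree := f.card_roots'
        _ = q := hdeg
    have heq : Finset.univ.image (algebraMap F (MvPolynomial (Fin n) F ⧸ m)) = f.roots.toFinset :=
      Finset.eq_of_subset_of_card_le hsub (by omega)
    -- each φ (X i) is a root of f
    have hXroot : ∀ i : Fin n, ∃ a : F, algebraMap F (MvPolynomial (Fin n) F ⧸ m) a = φ (X i) := by
      intro i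
      have h1 : φ (X i ^ q - X i) = 0 := by
        rw [Ideal.Quotient.mkₐ_eq_mk, Ideal.Quotient.eq_zero_iff_mem]
        exact hIm (hI i)
      have h2 : f.IsRoot (φ (X i)) := by
        simp only [hf, Polynomial.IsRoot, Polynomial.eval_sub, Polynomial.eval_pow,
          Polynomial.eval_X]
        rw [← map_pow, ← map_sub, h1]
      have : φ (X i) ∈ f.roots.toFinset := by
        simp only [Multiset.mem_toFinset, Polynomial.mem_roots hfne]; exact h2
      rw [← heq] at this
      obtain ⟨a, _, ha⟩ := Finset.mem_image.mp this
      exact ⟨a, ha⟩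
    choose a ha using hXroot
    refine ⟨a, fun P hP => ?_⟩
    have key : (Algebra.ofId F (MvPolynomial (Fin n) F ⧸ m)).comp (aeval a) = φ := by
      apply MvPolynomial.algHom_ext
      intro i
      simp only [AlgHom.comp_apply, aeval_X, Algebra.ofId_apply]
      exact ha i
    have heval : eval a P = aeval a P :=
      (congrFun (congrArg DFunLike.coe (MvPolynomial.coe_aeval_eq_eval a)) P).symm
    have : algebraMap F (MvPolynomial (Fin n) F ⧸ m) (eval a P) = φ P := by
      have h3 := congrArg (fun g => g P) key
      simp only [AlgHom.comp_apply, Algebra.ofId_apply] at h3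
      rw [heval, h3]
    have hφP : φ P = 0 := by
      rw [Ideal.Quotient.mkₐ_eq_mk, Ideal.Quotient.eq_zero_iff_mem]
      exact hIm hP
    apply hinj
    rw [this, hφP, map_zero]
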